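/- Let μ be a probability measure on ℝ such that ∫ e^{sv} dμ(v) < ∞ for every real s. Define L(s) = log ∫ e^{sv} dμ(v), V(s) = L'(s), and for each integer l ≥ 0 the tilted central moments H_l(s) = ( ∫ (v − V(s))^l e^{sv} dμ(v) ) / ( ∫ e^{sv} dμ(v) ). Then H₀ = 1, H₁ = 0, each H_l is differentiable on ℝ, and for every integer l ≥ 1 and every real s: H_{l+1}(s) = H_l'(s) + l·L''(s)·H_{l−1}(s). -/

import Mathlib

open Real MeasureTheory

/-- The cumulant generating function `L(s) = log ∫ e^(sv) dμ(v)` of a measure `μ` on `ℝ`. -/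
noncomputable def cgfOf (μ : Measure ℝ) (s : ℝ) : ℝ :=
  Real.log (∫ v, Real.exp (s * v) ∂μ)

/-- The `l`-th central moment `H_l(s)` of the exponentially tilted measure
`e^(sv) dμ(v) / ∫ e^(sv) dμ`, centered at `V(s) = L'(s)`. -/
noncomputable def tiltedMoment (μ : Measure ℝ) (l : ℕ) (s : ℝ) : ℝ :=
  (∫ v, (v - deriv (cgfOf μ) s) ^ l * Real.exp (s * v) ∂μ) / ∫ v, Real.exp (s * v) ∂μ

lemma aux_pointwise (n : ℕ) (t v : ℝ) :
    |v| ^ n * Real.exp (t * v) ≤ n.factorial * (Real.exp ((t+1)*v) + Real.exp ((t-1)*v)) := by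
  have h1 : |v| ^ n ≤ n.factorial * Real.exp |v| := by
    have := Real.sum_le_exp_of_nonneg (abs_nonneg v) (n+1)
    have h2 : |v| ^ n / n.factorial ≤ Real.exp |v| :=
      le_trans (Finset.single_le_sum (f := fun i => |v| ^ i / i.factorial)
        (fun i _ => by positivity) (Finset.self_mem_range_succ n)) this
    have hfac : (0:ℝ) < n.factorial := by exact_mod_cast Nat.factorial_pos n
    calc |v| ^ n = n.factorial * (|v| ^ n / n.factorial) := by field_simp
    _ ≤ n.factorial * Real.exp |v| := by
        exact mul_le_mul_of_nonneg_left h2 (le_of_lt hfac)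
  calc |v| ^ n * Real.exp (t*v) ≤ (n.factorial * Real.exp |v|) * Real.exp (t*v) := by
        exact mul_le_mul_of_nonneg_right h1 (Real.exp_pos _).le
    _ = n.factorial * Real.exp (|v| + t*v) := by rw [mul_assoc, ← Real.exp_add]
    _ ≤ n.factorial * (Real.exp ((t+1)*v) + Real.exp ((t-1)*v)) := by
        have hfac : (0:ℝ) ≤ n.factorial := by positivity
        apply mul_le_mul_of_nonneg_left _ hfac
        rcases le_or_gt 0 v with hv | hv
        · have : |v| + t*v = (t+1)*v := by rw [abs_of_nonneg hv]; ring
          rw [this]; exact le_add_of_nonneg_right (Real.exp_pos _).le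
        · have : |v| + t*v = (t-1)*v := by rw [abs_of_neg hv]; ring
          rw [this]; exact le_add_of_nonneg_left (Real.exp_pos _).le

lemma intAbs {μ : Measure ℝ} (hint : ∀ s : ℝ, Integrable (fun v => Real.exp (s * v)) μ)
    (n : ℕ) (t : ℝ) : Integrable (fun v => |v| ^ n * Real.exp (t * v)) μ := by
  have hb : Integrable (fun v => (n.factorial : ℝ) *
      (Real.exp ((t+1)*v) + Real.exp ((t-1)*v))) μ := (((hint (t+1)).add (hint (t-1))).const_mul _)
  refine hb.mono ?_ ?_
  · exact ((continuous_abs.pow n).mul (Real.continuous_exp.comp (continuous_const.mul continuous_id))).aestronglyMeasurable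
  · filter_upwards with v
    have h0 : (0:ℝ) ≤ (n.factorial : ℝ) * (Real.exp ((t+1)*v) + Real.exp ((t-1)*v)) := by positivity
    rw [Real.norm_eq_abs, Real.norm_eq_abs, abs_of_nonneg h0, abs_mul, abs_pow, abs_abs,
      Real.abs_exp]
    exact aux_pointwise n t v

noncomputable def Mn (μ : Measure ℝ) (n : ℕ) (s : ℝ) : ℝ := ∫ v, v ^ n * Real.exp (s * v) ∂μ

lemma exp_ball_bound {s x v : ℝ} (hx : |x - s| ≤ 1) :
    Real.exp (x * v) ≤ Real.exp ((s+1)*v) + Real.exp ((s-1)*v) := by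
  rw [abs_le] at hx
  rcases le_or_gt 0 v with hv | hv
  · have : x * v ≤ (s+1)*v := mul_le_mul_of_nonneg_right (by linarith) hv
    exact le_add_of_le_of_nonneg (Real.exp_le_exp.2 this) (Real.exp_pos _).le
  · have : x * v ≤ (s-1)*v := by nlinarith
    exact le_add_of_nonneg_of_le (Real.exp_pos _).le (Real.exp_le_exp.2 this)

lemma intMn {μ : Measure ℝ} (hint : ∀ s : ℝ, Integrable (fun v => Real.exp (s * v)) μ)
    (n : ℕ) (t : ℝ) : Integrable (fun v => v ^ n * Real.exp (t * v)) μ := by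
  refine (intAbs hint n t).mono ?_ ?_
  · exact ((continuous_pow n).mul (Real.continuous_exp.comp (continuous_const.mul continuous_id))).aestronglyMeasurable
  · filter_upwards with v
    simp [abs_mul, abs_pow, Real.abs_exp, le_refl]

lemma hasDerivAt_Mn {μ : Measure ℝ} (hint : ∀ s : ℝ, Integrable (fun v => Real.exp (s * v)) μ)
    (n : ℕ) (s : ℝ) : HasDerivAt (Mn μ n) (Mn μ (n+1) s) s := by
  have key := hasDerivAt_integral_of_dominated_loc_of_deriv_le (μ := μ)
      (F := fun x v => v ^ n * Real.exp (x * v)) (F' := fun x v => v ^ (n+1) * Real.exp (x * v))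
      (x₀ := s) (s := Metric.ball s 1)
      (bound := fun v => |v| ^ (n+1) * Real.exp ((s+1)*v) + |v| ^ (n+1) * Real.exp ((s-1)*v))
      (Metric.ball_mem_nhds s one_pos) ?_ (intMn hint n s) ?_ ?_ ?_ ?_
  · exact key.2
  · filter_upwards with x
    exact ((continuous_pow n).mul (Real.continuous_exp.comp (continuous_const.mul continuous_id))).aestronglyMeasurable
  · exact ((continuous_pow (n+1)).mul (Real.continuous_exp.comp (continuous_const.mul continuous_id))).aestronglyMeasurable
  · filter_upwards with v x hx
    rw [Metric.mem_ball, Real.dist_eq] at hx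
    have h1 : Real.exp (x*v) ≤ Real.exp ((s+1)*v) + Real.exp ((s-1)*v) := exp_ball_bound hx.le
    rw [Real.norm_eq_abs, abs_mul, abs_pow, Real.abs_exp, ← mul_add]
    exact mul_le_mul_of_nonneg_left h1 (by positivity)
  · exact ((intAbs hint (n+1) (s+1))).add (intAbs hint (n+1) (s-1))
  · filter_upwards with v x _
    have h3 : HasDerivAt (fun x => Real.exp (x*v)) (v * Real.exp (x*v)) x := by
      simpa [mul_comm] using ((hasDerivAt_id x).mul_const v).exp
    have := h3.const_mul (v ^ n)
    convert this using 1
    case e'_4 => rfl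
    ring

lemma Mn0_pos {μ : Measure ℝ} [IsProbabilityMeasure μ]
    (hint : ∀ s : ℝ, Integrable (fun v => Real.exp (s * v)) μ) (s : ℝ) : 0 < Mn μ 0 s := by
  have h : Mn μ 0 s = ∫ v, Real.exp (s * v) ∂μ := by
    unfold Mn; simp
  rw [h]
  exact ProbabilityTheory.mgf_pos (X := fun v => v) (hint s)

noncomputable def Vf (μ : Measure ℝ) (s : ℝ) : ℝ := Mn μ 1 s / Mn μ 0 s
noncomputable def Wf (μ : Measure ℝ) (s : ℝ) : ℝ :=
  (Mn μ 2 s * Mn μ 0 s - Mn μ 1 s * Mn μ 1 s) / (Mn μ 0 s) ^ 2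

lemma cgfOf_eq (μ : Measure ℝ) : cgfOf μ = fun s => Real.log (Mn μ 0 s) := by
  funext s; unfold cgfOf Mn; simp

lemma hasDerivAt_cgf {μ : Measure ℝ} [IsProbabilityMeasure μ]
    (hint : ∀ s : ℝ, Integrable (fun v => Real.exp (s * v)) μ) (s : ℝ) :
    HasDerivAt (cgfOf μ) (Vf μ s) s := by
  rw [cgfOf_eq]
  exact (hasDerivAt_Mn hint 0 s).log (Mn0_pos hint s).ne'

lemma deriv_cgf {μ : Measure ℝ} [IsProbabilityMeasure μ]
    (hint : ∀ s : ℝ, Integrable (fun v => Real.exp (s * v)) μ) :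
    deriv (cgfOf μ) = Vf μ := funext fun s => (hasDerivAt_cgf hint s).deriv

lemma hasDerivAt_Vf {μ : Measure ℝ} [IsProbabilityMeasure μ]
    (hint : ∀ s : ℝ, Integrable (fun v => Real.exp (s * v)) μ) (s : ℝ) :
    HasDerivAt (Vf μ) (Wf μ s) s :=
  (hasDerivAt_Mn hint 1 s).div (hasDerivAt_Mn hint 0 s) (Mn0_pos hint s).ne'

lemma iteratedDeriv_two_cgf {μ : Measure ℝ} [IsProbabilityMeasure μ]
    (hint : ∀ s : ℝ, Integrable (fun v => Real.exp (s * v)) μ) (s : ℝ) :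
    iteratedDeriv 2 (cgfOf μ) s = Wf μ s := by
  rw [show (2:ℕ) = 1 + 1 from rfl, iteratedDeriv_succ, iteratedDeriv_one, deriv_cgf hint]
  exact (hasDerivAt_Vf hint s).deriv

lemma continuous_Mn {μ : Measure ℝ} (hint : ∀ s : ℝ, Integrable (fun v => Real.exp (s * v)) μ)
    (n : ℕ) : Continuous (Mn μ n) :=
  (Differentiable.continuous fun s => (hasDerivAt_Mn hint n s).differentiableAt)

lemma continuous_Vf {μ : Measure ℝ} [IsProbabilityMeasure μ]
    (hint : ∀ s : ℝ, Integrable (fun v => Real.exp (s * v)) μ) : Continuous (Vf μ) :=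
  (continuous_Mn hint 1).div (continuous_Mn hint 0) fun s => (Mn0_pos hint s).ne'

lemma continuous_Wf {μ : Measure ℝ} [IsProbabilityMeasure μ]
    (hint : ∀ s : ℝ, Integrable (fun v => Real.exp (s * v)) μ) : Continuous (Wf μ) := by
  apply Continuous.div
  · exact ((continuous_Mn hint 2).mul (continuous_Mn hint 0)).sub
      ((continuous_Mn hint 1).mul (continuous_Mn hint 1))
  · exact (continuous_Mn hint 0).pow 2
  · exact fun s => pow_ne_zero 2 (Mn0_pos hint s).ne'

lemma intGen {μ : Measure ℝ} (hint : ∀ s : ℝ, Integrable (fun v => Real.exp (s * v)) μ)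
    {c : ℝ} (hc : 0 ≤ c) (l : ℕ) (t : ℝ) :
    Integrable (fun v => (|v| + c) ^ l * Real.exp (t * v)) μ := by
  have heq : (fun v => (|v| + c) ^ l * Real.exp (t * v)) =
      fun v => ∑ j ∈ Finset.range (l+1),
        (c ^ (l - j) * (l.choose j : ℝ)) * (|v| ^ j * Real.exp (t * v)) := by
    funext v
    rw [add_pow, Finset.sum_mul]
    congr 1; funext j; ring
  rw [heq]
  exact integrable_finset_sum _ fun j _ => (intAbs hint j t).const_mul _

lemma abs_sub_le' (v c : ℝ) : |v - c| ≤ |v| + |c| := by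
  calc |v - c| = |v + (-c)| := by rw [sub_eq_add_neg]
  _ ≤ |v| + |(-c)| := abs_add_le _ _
  _ = |v| + |c| := by rw [abs_neg]

lemma intPow {μ : Measure ℝ} (hint : ∀ s : ℝ, Integrable (fun v => Real.exp (s * v)) μ)
    (c : ℝ) (l : ℕ) (t : ℝ) :
    Integrable (fun v => (v - c) ^ l * Real.exp (t * v)) μ := by
  refine (intGen hint (abs_nonneg c) l t).mono ?_ ?_
  · exact (((continuous_id.sub continuous_const).pow l).mul
      (Real.continuous_exp.comp (continuous_const.mul continuous_id))).aestronglyMeasurable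
  · filter_upwards with v
    have hR : |(|v| + |c|) ^ l * Real.exp (t * v)| = (|v| + |c|) ^ l * Real.exp (t * v) :=
      abs_of_nonneg (by positivity)
    rw [Real.norm_eq_abs, Real.norm_eq_abs, hR, abs_mul, abs_pow, Real.abs_exp]
    have h1 : |v - c| ^ l ≤ (|v| + |c|) ^ l :=
      pow_le_pow_left₀ (abs_nonneg _) (abs_sub_le' v c) l
    exact mul_le_mul_of_nonneg_right h1 (Real.exp_pos _).le

noncomputable def G (μ : Measure ℝ) (l : ℕ) (s : ℝ) : ℝ :=
  ∫ v, (v - Vf μ s) ^ l * Real.exp (s * v) ∂μ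

lemma tiltedMoment_eq {μ : Measure ℝ} [IsProbabilityMeasure μ]
    (hint : ∀ s : ℝ, Integrable (fun v => Real.exp (s * v)) μ) (l : ℕ) :
    tiltedMoment μ l = fun s => G μ l s / Mn μ 0 s := by
  funext s
  unfold tiltedMoment G Mn
  rw [deriv_cgf hint]
  simp

lemma hasDerivAt_G {μ : Measure ℝ} [IsProbabilityMeasure μ]
    (hint : ∀ s : ℝ, Integrable (fun v => Real.exp (s * v)) μ) (m : ℕ) (s : ℝ) :
    HasDerivAt (G μ (m+1))
      (-(((m:ℝ)+1) * Wf μ s) * G μ m s + (G μ (m+2) s + Vf μ s * G μ (m+1) s)) s := by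
  obtain ⟨C₁, hC₁⟩ := (isCompact_Icc (a := s-1) (b := s+1)).exists_bound_of_continuousOn
    (continuous_Vf hint).continuousOn
  obtain ⟨C₂, hC₂⟩ := (isCompact_Icc (a := s-1) (b := s+1)).exists_bound_of_continuousOn
    (continuous_Wf hint).continuousOn
  set C : ℝ := max (max C₁ C₂) 0 with hC
  have hC0 : 0 ≤ C := le_max_right _ _
  have hVb : ∀ x ∈ Set.Icc (s-1) (s+1), |Vf μ x| ≤ C := fun x hx =>
    le_trans (hC₁ x hx) (le_max_of_le_left (le_max_left _ _))
  have hWb : ∀ x ∈ Set.Icc (s-1) (s+1), |Wf μ x| ≤ C := fun x hx =>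
    le_trans (hC₂ x hx) (le_max_of_le_left (le_max_right _ _))
  set F' : ℝ → ℝ → ℝ := fun x v =>
    (((m:ℝ)+1) * (v - Vf μ x) ^ m * (-(Wf μ x))) * Real.exp (x * v) +
      (v - Vf μ x) ^ (m+1) * (v * Real.exp (x * v)) with hF'
  have key := hasDerivAt_integral_of_dominated_loc_of_deriv_le (μ := μ)
      (F := fun x v => (v - Vf μ x) ^ (m+1) * Real.exp (x * v)) (F' := F')
      (x₀ := s) (s := Metric.ball s 1)
      (bound := fun v =>
        (((m:ℝ)+1) * C) * ((|v|+C) ^ m * Real.exp ((s+1)*v)) +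
        (((m:ℝ)+1) * C) * ((|v|+C) ^ m * Real.exp ((s-1)*v)) +
        ((|v|+C) ^ (m+2) * Real.exp ((s+1)*v)) +
        ((|v|+C) ^ (m+2) * Real.exp ((s-1)*v)))
      (Metric.ball_mem_nhds s one_pos) ?_ (intPow hint _ _ s) ?_ ?_ ?_ ?_
  · have hInt : ∫ v, F' s v ∂μ =
        -(((m:ℝ)+1) * Wf μ s) * G μ m s + (G μ (m+2) s + Vf μ s * G μ (m+1) s) := by
      have hsplit : F' s = fun v =>
          (-(((m:ℝ)+1) * Wf μ s)) * ((v - Vf μ s) ^ m * Real.exp (s*v)) +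
          ((v - Vf μ s) ^ (m+2) * Real.exp (s*v) +
            (Vf μ s) * ((v - Vf μ s) ^ (m+1) * Real.exp (s*v))) := by
        funext v; rw [hF']; ring
      simp only [hsplit]
      have i1 : Integrable (fun v => (-(((m:ℝ)+1) * Wf μ s)) *
          ((v - Vf μ s) ^ m * Real.exp (s*v))) μ := (intPow hint _ m s).const_mul _
      have i2 : Integrable (fun v => (v - Vf μ s) ^ (m+2) * Real.exp (s*v)) μ :=
        intPow hint _ (m+2) s
      have i3 : Integrable (fun v => (Vf μ s) *
          ((v - Vf μ s) ^ (m+1) * Real.exp (s*v))) μ := (intPow hint _ (m+1) s).const_mul _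
      have i23 : Integrable (fun v => (v - Vf μ s) ^ (m+2) * Real.exp (s*v) +
          (Vf μ s) * ((v - Vf μ s) ^ (m+1) * Real.exp (s*v))) μ := i2.add i3
      rw [integral_add i1 i23, integral_add i2 i3,
          integral_const_mul, integral_const_mul]
      rfl
    rw [← hInt]
    exact key.2
  · filter_upwards with x
    exact (((continuous_id.sub continuous_const).pow _).mul
      (Real.continuous_exp.comp (continuous_const.mul continuous_id))).aestronglyMeasurable
  · apply Continuous.aestronglyMeasurable
    rw [hF']
    fun_prop
  · filter_upwards with v x hx
    rw [Metric.mem_ball, Real.dist_eq] at hx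
    have hxK : x ∈ Set.Icc (s-1) (s+1) := by
      rw [abs_lt] at hx; constructor <;> linarith
    have e_le : Real.exp (x*v) ≤ Real.exp ((s+1)*v) + Real.exp ((s-1)*v) := exp_ball_bound hx.le
    have hvV : |v - Vf μ x| ≤ |v| + C :=
      le_trans (abs_sub_le' v _) (by linarith [hVb x hxK])
    have hW : |Wf μ x| ≤ C := hWb x hxK
    have hvC : |v| ≤ |v| + C := by linarith
    have hA : |(((m:ℝ)+1) * (v - Vf μ x) ^ m * (-(Wf μ x))) * Real.exp (x * v)| ≤
        (((m:ℝ)+1) * C) * ((|v|+C) ^ m * Real.exp ((s+1)*v)) +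
        (((m:ℝ)+1) * C) * ((|v|+C) ^ m * Real.exp ((s-1)*v)) := by
      rw [abs_mul, abs_mul, abs_mul, abs_neg, abs_pow, Real.abs_exp]
      have h1 : |((m:ℝ)+1)| = ((m:ℝ)+1) := abs_of_nonneg (by positivity)
      rw [h1]
      calc ((m:ℝ)+1) * |v - Vf μ x| ^ m * |Wf μ x| * Real.exp (x*v)
          ≤ ((m:ℝ)+1) * (|v|+C) ^ m * C * (Real.exp ((s+1)*v) + Real.exp ((s-1)*v)) := by
            gcongr
        _ = (((m:ℝ)+1) * C) * ((|v|+C) ^ m * Real.exp ((s+1)*v)) +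
            (((m:ℝ)+1) * C) * ((|v|+C) ^ m * Real.exp ((s-1)*v)) := by ring
    have hB : |(v - Vf μ x) ^ (m+1) * (v * Real.exp (x * v))| ≤
        ((|v|+C) ^ (m+2) * Real.exp ((s+1)*v)) + ((|v|+C) ^ (m+2) * Real.exp ((s-1)*v)) := by
      rw [abs_mul, abs_mul, abs_pow, Real.abs_exp]
      calc |v - Vf μ x| ^ (m+1) * (|v| * Real.exp (x*v))
          ≤ (|v|+C) ^ (m+1) * ((|v|+C) * (Real.exp ((s+1)*v) + Real.exp ((s-1)*v))) := by
            gcongr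
        _ = ((|v|+C) ^ (m+2) * Real.exp ((s+1)*v)) + ((|v|+C) ^ (m+2) * Real.exp ((s-1)*v)) := by
            ring
    calc ‖F' x v‖ ≤ |(((m:ℝ)+1) * (v - Vf μ x) ^ m * (-(Wf μ x))) * Real.exp (x * v)| +
          |(v - Vf μ x) ^ (m+1) * (v * Real.exp (x * v))| := by
          rw [hF']; exact norm_add_le _ _
      _ ≤ _ := by
          have := add_le_add hA hB
          calc _ ≤ _ := this
          _ = _ := by ring
  · refine (((((intGen hint hC0 m (s+1)).const_mul _).add
      ((intGen hint hC0 m (s-1)).const_mul _)).add (intGen hint hC0 (m+2) (s+1))).add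
      (intGen hint hC0 (m+2) (s-1)))
  · filter_upwards with v x _
    have h1 : HasDerivAt (fun x => v - Vf μ x) (-(Wf μ x)) x :=
      (hasDerivAt_Vf hint x).const_sub v
    have h2 := h1.pow (m+1)
    have h3 : HasDerivAt (fun x => Real.exp (x*v)) (v * Real.exp (x*v)) x := by
      simpa [mul_comm] using ((hasDerivAt_id x).mul_const v).exp
    have h4 := h2.mul h3
    convert h4 using 1
    case e'_4 => rfl
    case e'_8 => rfl
    rw [hF']
    push_cast
    simp only [Pi.pow_apply]

lemma G_one_eq_zero {μ : Measure ℝ} [IsProbabilityMeasure μ]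
    (hint : ∀ s : ℝ, Integrable (fun v => Real.exp (s * v)) μ) (s : ℝ) :
    G μ 1 s = 0 := by
  have heq : (fun v => (v - Vf μ s) ^ 1 * Real.exp (s*v)) =
      fun v => v ^ 1 * Real.exp (s*v) - (Vf μ s) * (v ^ 0 * Real.exp (s*v)) := by
    funext v; ring
  have i1 : Integrable (fun v => v ^ 1 * Real.exp (s*v)) μ := intMn hint 1 s
  have i2 : Integrable (fun v => (Vf μ s) * (v ^ 0 * Real.exp (s*v))) μ :=
    (intMn hint 0 s).const_mul _
  unfold G
  rw [heq, integral_sub i1 i2, integral_const_mul]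
  show Mn μ 1 s - Vf μ s * Mn μ 0 s = 0
  rw [show Vf μ s = Mn μ 1 s / Mn μ 0 s from rfl,
    div_mul_cancel₀ _ (Mn0_pos hint s).ne', sub_self]


/-- The recursion of Section 8: `H_0 = 1`, `H_1 = 0`, each `H_l` is differentiable and
`H_{l+1}(s) = H_l'(s) + l * L''(s) * H_{l-1}(s)` for `l >= 1`. -/
theorem tiltedMoment_recursion (μ : Measure ℝ) [IsProbabilityMeasure μ]
    (hint : ∀ s : ℝ, Integrable (fun v => Real.exp (s * v)) μ) :
    (∀ s : ℝ, tiltedMoment μ 0 s = 1) ∧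
    (∀ s : ℝ, tiltedMoment μ 1 s = 0) ∧
    (∀ l : ℕ, Differentiable ℝ (tiltedMoment μ l)) ∧
    (∀ l : ℕ, 1 ≤ l → ∀ s : ℝ,
      tiltedMoment μ (l + 1) s =
        deriv (tiltedMoment μ l) s +
          l * iteratedDeriv 2 (cgfOf μ) s * tiltedMoment μ (l - 1) s) := by
  have hMpos : ∀ s, 0 < Mn μ 0 s := Mn0_pos hint
  have h0 : ∀ s : ℝ, tiltedMoment μ 0 s = 1 := by
    intro s
    rw [tiltedMoment_eq hint]
    have hG0 : G μ 0 s = Mn μ 0 s := by unfold G Mn; simp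
    show G μ 0 s / Mn μ 0 s = 1
    rw [hG0]
    exact div_self (hMpos s).ne'
  refine ⟨h0, ?_, ?_, ?_⟩
  · intro s
    rw [tiltedMoment_eq hint]
    show G μ 1 s / Mn μ 0 s = 0
    rw [G_one_eq_zero hint, zero_div]
  · intro l
    match l with
    | 0 =>
      have : tiltedMoment μ 0 = fun _ => (1:ℝ) := funext h0
      rw [this]; exact differentiable_const 1
    | (m+1) =>
      rw [tiltedMoment_eq hint]
      exact fun s => ((hasDerivAt_G hint m s).div (hasDerivAt_Mn hint 0 s)
        (hMpos s).ne').differentiableAt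
  · intro l hl s
    obtain ⟨m, rfl⟩ : ∃ m, l = m + 1 := ⟨l - 1, (Nat.succ_pred_eq_of_pos hl).symm⟩
    have hd : HasDerivAt (fun s => G μ (m+1) s / Mn μ 0 s)
        (((-(((m:ℝ)+1) * Wf μ s) * G μ m s + (G μ (m+2) s + Vf μ s * G μ (m+1) s)) * Mn μ 0 s -
          G μ (m+1) s * Mn μ 1 s) / (Mn μ 0 s) ^ 2) s :=
      (hasDerivAt_G hint m s).div (hasDerivAt_Mn hint 0 s) (hMpos s).ne'
    have hderiv : deriv (tiltedMoment μ (m+1)) s =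
        ((-(((m:ℝ)+1) * Wf μ s) * G μ m s + (G μ (m+2) s + Vf μ s * G μ (m+1) s)) * Mn μ 0 s -
          G μ (m+1) s * Mn μ 1 s) / (Mn μ 0 s) ^ 2 := by
      rw [tiltedMoment_eq hint]; exact hd.deriv
    have hcast : ((m + 1 : ℕ) : ℝ) = (m : ℝ) + 1 := by push_cast; ring
    rw [show m + 1 + 1 = m + 2 from rfl, show m + 1 - 1 = m from rfl,
      tiltedMoment_eq hint (m+2), tiltedMoment_eq hint m, hderiv,
      iteratedDeriv_two_cgf hint, hcast]
    have hVf : Vf μ s = Mn μ 1 s / Mn μ 0 s := rfl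
    rw [hVf]
    field_simp [(hMpos s).ne']
    ring
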